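/- Let A₁,...,A_N be 2×2 complex matrices with no common eigenvector. Then the quantity κ := min over unit vectors u, v of max over X ∈ {I, A₁,...,A_N} of |⟨Xu, v⟩| is strictly positive. -/

import Mathlib

noncomputable def opNormC (A : Matrix (Fin 2) (Fin 2) ℂ) : ℝ :=
  ‖LinearMap.toContinuousLinearMap (Matrix.toEuclideanLin A)‖

/-- The maximum over X ∈ {I, A₁, …, A_N} of |⟨Xu, v⟩|. -/
noncomputable def maxInner {N : ℕ} (A : Fin N → Matrix (Fin 2) (Fin 2) ℂ)
    (u v : EuclideanSpace ℂ (Fin 2)) : ℝ :=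
  ⨆ i : Option (Fin N), ‖(inner ℂ (Matrix.toEuclideanLin (i.elim 1 A) u) v : ℂ)‖

/-- κ := min over unit vectors u, v of maxInner A u v. -/
noncomputable def kappa {N : ℕ} (A : Fin N → Matrix (Fin 2) (Fin 2) ℂ) : ℝ :=
  sInf {r : ℝ | ∃ u v : EuclideanSpace ℂ (Fin 2), ‖u‖ = 1 ∧ ‖v‖ = 1 ∧ r = maxInner A u v}

/-- A₁, …, A_N have a common eigenvector. -/
def HasCommonEigenvector {N : ℕ} (A : Fin N → Matrix (Fin 2) (Fin 2) ℂ) : Prop :=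
  ∃ w : Fin 2 → ℂ, w ≠ 0 ∧ ∀ j, ∃ c : ℂ, (A j).mulVec w = c • w

lemma maxInner_pos {N : ℕ} (A : Fin N → Matrix (Fin 2) (Fin 2) ℂ)
    (h : ¬ HasCommonEigenvector A) {u v : EuclideanSpace ℂ (Fin 2)}
    (hu : ‖u‖ = 1) (hv : ‖v‖ = 1) : 0 < maxInner A u v := by
  have hbdd : BddAbove (Set.range fun i : Option (Fin N) =>
      ‖(inner ℂ (Matrix.toEuclideanLin (i.elim 1 A) u) v : ℂ)‖) :=
    Set.Finite.bddAbove (Set.finite_range _)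
  have hle : ∀ i : Option (Fin N),
      ‖(inner ℂ (Matrix.toEuclideanLin (i.elim 1 A) u) v : ℂ)‖ ≤ maxInner A u v :=
    fun i => le_ciSup hbdd i
  have h0 : 0 ≤ maxInner A u v := le_trans (norm_nonneg _) (hle none)
  rcases h0.lt_or_eq with h0 | h0
  · exact h0
  exfalso
  apply h
  -- all inner products vanish
  have hzero : ∀ i : Option (Fin N),
      (inner ℂ (Matrix.toEuclideanLin (i.elim 1 A) u) v : ℂ) = 0 := by
    intro i
    have := hle i
    rw [← h0] at this
    exact norm_le_zero_iff.mp this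
  have hu0 : u ≠ 0 := fun hu0 => by simp [hu0] at hu
  have hv0 : v ≠ 0 := fun hv0 => by simp [hv0] at hv
  have huv : (inner ℂ u v : ℂ) = 0 := by
    have := hzero none
    simpa [Matrix.toEuclideanLin_apply, Matrix.one_mulVec] using this
  -- the orthogonal complement of span v has dimension 1
  haveI : Fact (Module.finrank ℂ (EuclideanSpace ℂ (Fin 2)) = 1 + 1) :=
    ⟨by simp⟩
  have hdim : Module.finrank ℂ ((ℂ ∙ v)ᗮ) = 1 :=
    Submodule.finrank_orthogonal_span_singleton hv0
  have humem : u ∈ (ℂ ∙ v)ᗮ := by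
    rw [Submodule.mem_orthogonal_singleton_iff_inner_left]
    exact huv
  have hspan : (ℂ ∙ u) = (ℂ ∙ v)ᗮ := by
    apply Submodule.eq_of_le_of_finrank_eq
    · rwa [Submodule.span_singleton_le_iff_mem]
    · rw [hdim, finrank_span_singleton hu0]
  refine ⟨(WithLp.equiv 2 _) u, ?_, ?_⟩
  · simpa using hu0
  · intro j
    have hj : Matrix.toEuclideanLin (A j) u ∈ (ℂ ∙ v)ᗮ := by
      rw [Submodule.mem_orthogonal_singleton_iff_inner_left]
      exact hzero (some j)
    rw [← hspan, Submodule.mem_span_singleton] at hj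
    obtain ⟨c, hc⟩ := hj
    refine ⟨c, ?_⟩
    have := congrArg (WithLp.equiv 2 (Fin 2 → ℂ)) hc.symm
    simpa [Matrix.toEuclideanLin_apply] using this

lemma continuous_maxInner {N : ℕ} (A : Fin N → Matrix (Fin 2) (Fin 2) ℂ) :
    Continuous fun p : EuclideanSpace ℂ (Fin 2) × EuclideanSpace ℂ (Fin 2) =>
      maxInner A p.1 p.2 := by
  have : ∀ p : EuclideanSpace ℂ (Fin 2) × EuclideanSpace ℂ (Fin 2),
      maxInner A p.1 p.2 = Finset.univ.sup' Finset.univ_nonempty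
        (fun i : Option (Fin N) =>
          ‖(inner ℂ (Matrix.toEuclideanLin (i.elim 1 A) p.1) p.2 : ℂ)‖) := by
    intro p
    rw [maxInner, Finset.sup'_univ_eq_ciSup]
  simp only [this]
  apply Continuous.finset_sup'_apply Finset.univ_nonempty
  intro i _
  exact (Continuous.inner
    ((Matrix.toEuclideanLin (i.elim 1 A)).continuous_of_finiteDimensional.comp
      continuous_fst) continuous_snd).norm

/-- if A₁,…,A_N have no common eigenvector then κ > 0. -/
theorem stmt3 {N : ℕ} (hN : 0 < N) (A : Fin N → Matrix (Fin 2) (Fin 2) ℂ)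
    (h : ¬ HasCommonEigenvector A) : 0 < kappa A := by
  set E := EuclideanSpace ℂ (Fin 2)
  have hSeq : {r : ℝ | ∃ u v : E, ‖u‖ = 1 ∧ ‖v‖ = 1 ∧ r = maxInner A u v} =
      (fun p : E × E => maxInner A p.1 p.2) ''
        (Metric.sphere (0 : E) 1 ×ˢ Metric.sphere (0 : E) 1) := by
    ext r
    constructor
    · rintro ⟨u, v, hu, hv, rfl⟩
      exact ⟨(u, v), ⟨by simpa using hu, by simpa using hv⟩, rfl⟩
    · rintro ⟨⟨u, v⟩, ⟨hu, hv⟩, rfl⟩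
      exact ⟨u, v, by simpa using hu, by simpa using hv, rfl⟩
  have hcomp : IsCompact ((fun p : E × E => maxInner A p.1 p.2) ''
      (Metric.sphere (0 : E) 1 ×ˢ Metric.sphere (0 : E) 1)) :=
    ((isCompact_sphere (0 : E) 1).prod (isCompact_sphere (0 : E) 1)).image
      (continuous_maxInner A)
  have hne : ((fun p : E × E => maxInner A p.1 p.2) ''
      (Metric.sphere (0 : E) 1 ×ˢ Metric.sphere (0 : E) 1)).Nonempty := by
    refine ⟨_, ⟨(EuclideanSpace.single 0 1, EuclideanSpace.single 0 1), ⟨?_, ?_⟩, rfl⟩⟩ <;>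
      simp [E, EuclideanSpace.norm_single]
  have hmem := hcomp.sInf_mem hne
  rw [kappa, hSeq]
  obtain ⟨⟨u, v⟩, ⟨hu, hv⟩, heq⟩ := hmem
  rw [← heq]
  exact maxInner_pos A h (by simpa using hu) (by simpa using hv)
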